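/- There exists a dataset in ℝ (1-dimensional) that is separable with respect to a ground-truth clustering into two clusters, together with an arrival order, such that the greedy online tree-building algorithm (insert each point as a sibling of its nearest-neighbor leaf) produces a cluster tree with dendrogram purity at most 7/8. -/

import Mathlib

open scoped Classical

inductive CTree (α : Type*) where
  | leaf (x : α) : CTree α
  | node (l r : CTree α) : CTree α

namespace CTree

variable {α : Type*}

/-- The set of data points (descendant leaves) of a node. -/
noncomputable def lvs : CTree α → Finset α
  | leaf x => {x}
  | node l r => lvs l ∪ lvs r

theorem lvs_nonempty (t : CTree α) : t.lvs.Nonempty := by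
  induction t with
  | leaf x => exact ⟨x, by simp [lvs]⟩
  | node l r ihl ihr => exact ihl.mono (by simp [lvs])

/-- `Sub s t` : `s` is a subtree (node) of `t`. -/
inductive Sub : CTree α → CTree α → Prop
  | refl (t : CTree α) : Sub t t
  | left {s l r : CTree α} : Sub s l → Sub s (node l r)
  | right {s l r : CTree α} : Sub s r → Sub s (node l r)

/-- Least common ancestor (as a subtree) of two data points. -/
noncomputable def lca : CTree α → α → α → CTree α
  | leaf a, _, _ => leaf a
  | node l r, x, y =>
      if x ∈ lvs l ∧ y ∈ lvs l then lca l x y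
      else if x ∈ lvs r ∧ y ∈ lvs r then lca r x y
      else node l r

/-- Dendrogram purity 1: for every same-cluster pair, all leaves below their
least common ancestor belong to that cluster. -/
def PurityOne (C : α → ℕ) (t : CTree α) : Prop :=
  ∀ x ∈ t.lvs, ∀ y ∈ t.lvs, x ≠ y → C x = C y → ∀ z ∈ (t.lca x y).lvs, C z = C x

/-- A dataset `X` is separable w.r.t. a ground-truth clustering `C`:
every within-cluster distance is strictly smaller than every between-cluster distance. -/
def Separable [MetricSpace α] (X : Finset α) (C : α → ℕ) : Prop :=
  ∀ x ∈ X, ∀ y ∈ X, ∀ x' ∈ X, ∀ y' ∈ X,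
    x ≠ y → C x = C y → C x' ≠ C y' → dist x y < dist x' y'

/-- A node `v` with sibling `v'` and aunt `a` is masked if some `x ∈ lvs v` is farther
from some point of `v'` than from some point of `a`
(i.e. `max_{y ∈ lvs v'} ‖x-y‖ > min_{z ∈ lvs a} ‖x-z‖`). -/
def Masked [MetricSpace α] (v v' a : CTree α) : Prop :=
  ∃ x ∈ v.lvs,
    (a.lvs.inf' (lvs_nonempty a) fun z => dist x z) <
      (v'.lvs.sup' (lvs_nonempty v') fun y => dist x y)

end CTree

abbrev Euc (d : ℕ) := EuclideanSpace ℝ (Fin d)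

namespace CTree

variable {α : Type*} [MetricSpace α]

/-- Minimum distance from a point `x` to the leaves of `t`. -/
noncomputable def minDist (x : α) (t : CTree α) : ℝ :=
  t.lvs.inf' (lvs_nonempty t) fun y => dist x y

/-- Greedy insertion: descend towards the child containing the nearest neighbor of `x`,
and split the nearest-neighbor leaf, making `x` its sibling. -/
noncomputable def insertNear (x : α) : CTree α → CTree α
  | leaf a => node (leaf a) (leaf x)
  | node l r =>
      if minDist x l ≤ minDist x r then node (insertNear x l) r
      else node l (insertNear x r)

/-- The greedy online algorithm applied to the arrival order `x0 :: xs`. -/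
noncomputable def buildGreedy (x0 : α) (xs : List α) : CTree α :=
  xs.foldl (fun t y => insertNear y t) (leaf x0)

end CTree

namespace CTree

variable {α : Type*}

/-- Dendrogram purity of a cluster tree w.r.t. a ground-truth clustering `C`. -/
noncomputable def DP (C : α → ℕ) (t : CTree α) : ℝ :=
  (∑ p ∈ (t.lvs ×ˢ t.lvs).filter fun p => p.1 ≠ p.2 ∧ C p.1 = C p.2,
      (((t.lca p.1 p.2).lvs.filter fun z => C z = C p.1).card : ℝ) /
        ((t.lca p.1 p.2).lvs.card : ℝ)) /
    (((t.lvs ×ˢ t.lvs).filter fun p => p.1 ≠ p.2 ∧ C p.1 = C p.2).card : ℝ)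

end CTree


open CTree
noncomputable def C0 : ℝ → ℕ := fun x => if x < 2 then 0 else 1
noncomputable def T : CTree ℝ := node (leaf 0) (node (leaf 1) (leaf 3))

theorem aux_dp : DP C0 T ≤ 7/8 := by
  have hl : T.lvs = {0, 1, 3} := by
    show ({0} ∪ ({1} ∪ {3}) : Finset ℝ) = {0,1,3}
    ext a; simp [or_assoc]; tauto
  have hfil : ((T.lvs ×ˢ T.lvs).filter fun p => p.1 ≠ p.2 ∧ C0 p.1 = C0 p.2)
      = {((0:ℝ),(1:ℝ)), (1,0)} := by
    rw [hl]
    ext ⟨a, b⟩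
    rw [Finset.mem_filter]
    simp only [Finset.mem_filter, Finset.mem_product, Finset.mem_insert, Finset.mem_singleton,
      Prod.mk.injEq, C0]
    constructor
    · rintro ⟨⟨ha, hb⟩, hne, hc⟩
      rcases ha with rfl | rfl | rfl <;> rcases hb with rfl | rfl | rfl <;> revert hne hc <;> norm_num
    · rintro (⟨rfl, rfl⟩ | ⟨rfl, rfl⟩) <;> norm_num
  have hlca1 : T.lca 0 1 = T := by
    simp [T, lca, lvs]
  have hlca2 : T.lca 1 0 = T := by
    simp [T, lca, lvs]
  have hpure : (T.lvs.filter fun z => C0 z = 0).card = 2 := by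
    rw [hl]
    rw [show ({0,1,3} : Finset ℝ).filter (fun z => C0 z = 0) = {0, 1} from by
      ext a
      rw [Finset.mem_filter]
      simp only [Finset.mem_filter, Finset.mem_insert, Finset.mem_singleton, C0]
      constructor
      · rintro ⟨rfl | rfl | rfl, hc⟩ <;> revert hc <;> norm_num
      · rintro (rfl | rfl) <;> norm_num]
    norm_num
  have hcard : T.lvs.card = 3 := by
    rw [hl]; rw [Finset.card_insert_of_notMem (by norm_num),
      Finset.card_insert_of_notMem (by norm_num), Finset.card_singleton]
  rw [DP, hfil]
  rw [Finset.sum_insert (by norm_num), Finset.sum_singleton]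
  simp only [hlca1, hlca2]
  have h0 : C0 0 = 0 := by norm_num [C0]
  have h1 : C0 1 = 0 := by norm_num [C0]
  rw [h0, h1, hpure, hcard]
  norm_num



open CTree in
/-- there is a separable dataset in `ℝ` with two ground-truth clusters
and an arrival order on which the greedy online algorithm builds a tree of
dendrogram purity at most `7/8`. -/
theorem greedy_dendrogram_purity_at_most_seven_eighths :
    ∃ (x0 : ℝ) (xs : List ℝ) (C : ℝ → ℕ),
      (x0 :: xs).Nodup ∧
      Separable (x0 :: xs).toFinset C ∧
      ((x0 :: xs).toFinset.image C).card = 2 ∧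
      DP C (buildGreedy x0 xs) ≤ 7 / 8 := by
  refine ⟨0, [1, 3], C0, ?_, ?_, ?_, ?_⟩
  · norm_num
  · intro x hx y hy x' hx' y' hy' hxy hC hC'
    simp only [List.toFinset_cons, List.toFinset_nil, Finset.mem_insert, Finset.mem_singleton,
      Finset.notMem_empty, or_false] at hx hy hx' hy'
    rcases hx with rfl | rfl | rfl <;> rcases hy with rfl | rfl | rfl <;>
      rcases hx' with rfl | rfl | rfl <;> rcases hy' with rfl | rfl | rfl <;>
      revert hxy hC hC' <;> norm_num [Real.dist_eq, C0]
  · have : (([0,1,3] : List ℝ).toFinset.image C0) = {0, 1} := by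
      simp only [List.toFinset_cons, List.toFinset_nil, LawfulSingleton.insert_empty_eq]
      rw [Finset.image_insert, Finset.image_insert, Finset.image_singleton]
      norm_num [C0]
    rw [show ((0:ℝ) :: [1,3]) = [0,1,3] from rfl, this]
    decide
  · have ht : buildGreedy (0:ℝ) [1,3] = T := by
      simp [buildGreedy, insertNear, minDist, lvs, Real.dist_eq, T]
      norm_num
    rw [ht]
    exact aux_dp
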